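/- Every group that is FC-nilpotent and has finite exponent is locally finite: if G = FC_n(G) for some n and G has finite exponent, then every finitely generated subgroup of G is finite. -/

import Mathlib

/-- The `m`-th iterated FC-center of `G` (as a set): `FC₀(G) = {1}` and `x ∈ FC_{m+1}(G)`
iff `C_G(x / FC_m(G)) = {y | [x,y] ∈ FC_m(G)}` has finite index in `G`, i.e. finitely many
right translates of it cover `G`. -/
def FCset (G : Type*) [Group G] : ℕ → Set G
  | 0 => {1}
  | (m + 1) => {x : G | ∃ T : Finset G, ∀ g : G, ∃ t ∈ T,
      x⁻¹ * (g * t⁻¹)⁻¹ * x * (g * t⁻¹) ∈ FCset G m}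


namespace FCaux

variable {G : Type*} [Group G]

open Subgroup

lemma pull_front [DecidableEq G] {S : Finset G} (hconj : ∀ a ∈ S, ∀ b ∈ S, b⁻¹ * a * b ∈ S)
    {a : G} (ha : a ∈ S) :
    ∀ l : List G, (∀ x ∈ l, x ∈ S) → a ∈ l →
      ∃ l' : List G, (∀ x ∈ l', x ∈ S) ∧ l'.length + 1 = l.length ∧
        a * l'.prod = l.prod ∧ l'.count a + 1 = l.count a := by
  classical
  intro l
  induction l with
  | nil => intro _ h; simp at h
  | cons b t ih =>
    intro hmem hal
    by_cases hba : b = a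
    · subst hba
      exact ⟨t, fun x hx => hmem x (List.mem_cons_of_mem _ hx), by simp, by simp,
        by simp [List.count_cons]⟩
    · have hat : a ∈ t := by
        rcases List.mem_cons.1 hal with h | h
        · exact absurd h.symm hba
        · exact h
      obtain ⟨t', ht'S, ht'len, ht'prod, ht'count⟩ :=
        ih (fun x hx => hmem x (List.mem_cons_of_mem _ hx)) hat
      refine ⟨(a⁻¹ * b * a) :: t', ?_, ?_, ?_, ?_⟩
      · intro x hx
        rcases List.mem_cons.1 hx with h | h
        · subst h; exact hconj b (hmem b List.mem_cons_self) a ha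
        · exact ht'S x h
      · simp [← ht'len]
      · have h1 : a * ((a⁻¹ * b * a) * t'.prod) = b * (a * t'.prod) := by group
        simp only [List.prod_cons, h1, ht'prod]
      · have hne : a⁻¹ * b * a ≠ a := by
          intro h
          apply hba
          have h2 := congrArg (fun z => a * z * a⁻¹) h
          simpa [mul_assoc] using h2
        have e1 : ((a⁻¹ * b * a) :: t').count a = t'.count a := by
          simp [List.count_cons, hne, Ne.symm hne]
        have e2 : (b :: t).count a = t.count a := by
          simp [List.count_cons, hba, Ne.symm (show b ≠ a from hba)]
        rw [e1, e2]
        omega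

lemma pull_front_pow [DecidableEq G] {S : Finset G} (hconj : ∀ a ∈ S, ∀ b ∈ S, b⁻¹ * a * b ∈ S)
    {a : G} (ha : a ∈ S) :
    ∀ k : ℕ, ∀ l : List G, (∀ x ∈ l, x ∈ S) → k ≤ l.count a →
      ∃ l' : List G, (∀ x ∈ l', x ∈ S) ∧ l'.length + k = l.length ∧
        a ^ k * l'.prod = l.prod := by
  classical
  intro k
  induction k with
  | zero => intro l hl _; exact ⟨l, hl, by simp, by simp⟩
  | succ k ih =>
    intro l hl hk
    have hal : a ∈ l := List.count_pos_iff.mp (by omega)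
    obtain ⟨l', hl'S, hl'len, hl'prod, hl'count⟩ := pull_front hconj ha l hl hal
    obtain ⟨l'', hS, hlen, hprod⟩ := ih l' hl'S (by omega)
    refine ⟨l'', hS, by omega, ?_⟩
    rw [pow_succ', mul_assoc, hprod, hl'prod]

lemma shorten {S : Finset G} (hconj : ∀ a ∈ S, ∀ b ∈ S, b⁻¹ * a * b ∈ S)
    {e : ℕ} (he : e ≠ 0) (hord : ∀ a ∈ S, a ^ e = 1) :
    ∀ (n : ℕ) (l : List G), l.length ≤ n → (∀ x ∈ l, x ∈ S) →
      ∃ l' : List G, (∀ x ∈ l', x ∈ S) ∧ l'.length ≤ S.card * (e - 1) ∧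
        l'.prod = l.prod := by
  classical
  haveI := Classical.decEq G
  intro n
  induction n with
  | zero => intro l hl hmem; exact ⟨l, hmem, by omega, rfl⟩
  | succ n ih =>
    intro l hl hmem
    by_cases hB : l.length ≤ S.card * (e - 1)
    · exact ⟨l, hmem, hB, rfl⟩
    · push_neg at hB
      have hsum : ∑ a ∈ S, l.count a = l.length := by
        rw [← Finset.sum_subset (fun a (h : a ∈ l.toFinset) => hmem a (List.mem_toFinset.1 h))
          (fun a _ h => List.count_eq_zero_of_not_mem fun hc => h (List.mem_toFinset.2 hc))]
        simpa using (Multiset.toFinset_sum_count_eq (l : Multiset G))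
      have hex : ∃ a ∈ S, e ≤ l.count a := by
        by_contra hcon
        push_neg at hcon
        have : ∑ a ∈ S, l.count a ≤ ∑ _a ∈ S, (e - 1) :=
          Finset.sum_le_sum fun a haS => by have := hcon a haS; omega
        rw [hsum, Finset.sum_const, smul_eq_mul] at this
        omega
      obtain ⟨a, haS, hcount⟩ := hex
      obtain ⟨l', hS, hlen, hprod⟩ := pull_front_pow hconj haS e l hmem hcount
      have : l'.prod = l.prod := by rw [← hprod, hord a haS, one_mul]
      obtain ⟨l'', h1, h2, h3⟩ := ih l' (by omega) hS
      exact ⟨l'', h1, h2, h3.trans this⟩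

lemma closure_finite (S : Finset G) (hconj : ∀ a ∈ S, ∀ b ∈ S, b⁻¹ * a * b ∈ S)
    (hinv : ∀ a ∈ S, a⁻¹ ∈ S) {e : ℕ} (he : e ≠ 0) (hord : ∀ a ∈ S, a ^ e = 1) :
    (Subgroup.closure (S : Set G) : Set G).Finite := by
  classical
  set B := S.card * (e - 1) with hB
  have hlists : {l : List G | (∀ x ∈ l, x ∈ S) ∧ l.length ≤ B}.Finite := by
    have hfin : {m : List {x // x ∈ S} | m.length ≤ B}.Finite := List.finite_length_le _ B
    have : {l : List G | (∀ x ∈ l, x ∈ S) ∧ l.length ≤ B} ⊆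
        (fun m : List {x // x ∈ S} => m.map (Subtype.val)) '' {m | m.length ≤ B} := by
      rintro l ⟨hmem, hlen⟩
      refine ⟨l.pmap (fun x hx => (⟨x, hx⟩ : {x // x ∈ S})) hmem, by simpa using hlen, ?_⟩
      simp only [List.map_pmap]
      exact (List.pmap_eq_map (f := id) hmem).trans (List.map_id l)
    exact (hfin.image _).subset this
  have hsub : (Subgroup.closure (S : Set G) : Set G) ⊆
      List.prod '' {l : List G | (∀ x ∈ l, x ∈ S) ∧ l.length ≤ B} := by
    intro x hx
    have hx' : x ∈ Submonoid.closure ((S : Set G) ∪ (S : Set G)⁻¹) := by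
      have := Subgroup.closure_toSubmonoid (S : Set G)
      have hxx : x ∈ (Subgroup.closure (S : Set G)).toSubmonoid := hx
      rwa [this] at hxx
    have hUnion : (S : Set G) ∪ (S : Set G)⁻¹ = (S : Set G) := by
      apply Set.union_eq_self_of_subset_right
      intro y hy
      have : y⁻¹ ∈ S := hy
      simpa using hinv _ this
    rw [hUnion] at hx'
    obtain ⟨l, hmem, hprod⟩ := Submonoid.exists_list_of_mem_closure hx'
    obtain ⟨l', h1, h2, h3⟩ := shorten hconj he hord l.length l le_rfl hmem
    exact ⟨l', ⟨h1, h2⟩, h3.trans hprod⟩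
  exact (hlists.image _).subset hsub

lemma finite_of_fc_of_exponent (Γ : Type*) [Group Γ] {e : ℕ} (he : e ≠ 0)
    (hexp : ∀ g : Γ, g ^ e = 1)
    (hFC : ∀ x : Γ, {y : Γ | ∃ g : Γ, g⁻¹ * x * g = y}.Finite)
    (hfg : Group.FG Γ) : Finite Γ := by
  classical
  obtain ⟨S0, hS0top, hS0fin⟩ := Group.fg_iff.mp hfg
  set X : Finset Γ := hS0fin.toFinset with hXdef
  have hX : Subgroup.closure (X : Set Γ) = ⊤ := by
    rw [hXdef, Set.Finite.coe_toFinset]; exact hS0top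
  set Sset : Set Γ := ⋃ x ∈ (X : Set Γ),
    ({y : Γ | ∃ g : Γ, g⁻¹ * x * g = y} ∪ {y : Γ | ∃ g : Γ, g⁻¹ * x⁻¹ * g = y}) with hSset
  have hSfin : Sset.Finite :=
    Set.Finite.biUnion X.finite_toSet (fun x _ => (hFC x).union (hFC x⁻¹))
  set SF : Finset Γ := hSfin.toFinset with hSF
  have hmemSF : ∀ y, y ∈ SF ↔ ∃ x ∈ X, (∃ g : Γ, g⁻¹ * x * g = y) ∨
      (∃ g : Γ, g⁻¹ * x⁻¹ * g = y) := by
    intro y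
    simp [hSF, hSset, Set.Finite.mem_toFinset, Set.mem_iUnion, Set.mem_union]
  have hconj : ∀ a ∈ SF, ∀ b ∈ SF, b⁻¹ * a * b ∈ SF := by
    intro a haSF b _
    obtain ⟨x, hxX, hcase⟩ := (hmemSF a).1 haSF
    refine (hmemSF _).2 ⟨x, hxX, ?_⟩
    rcases hcase with ⟨g, hg⟩ | ⟨g, hg⟩
    · exact Or.inl ⟨g * b, by rw [← hg]; group⟩
    · exact Or.inr ⟨g * b, by rw [← hg]; group⟩
  have hinv : ∀ a ∈ SF, a⁻¹ ∈ SF := by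
    intro a haSF
    obtain ⟨x, hxX, hcase⟩ := (hmemSF a).1 haSF
    refine (hmemSF _).2 ⟨x, hxX, ?_⟩
    rcases hcase with ⟨g, hg⟩ | ⟨g, hg⟩
    · exact Or.inr ⟨g, by rw [← hg]; group⟩
    · exact Or.inl ⟨g, by rw [← hg]; group⟩
  have hXSF : (X : Set Γ) ⊆ (SF : Set Γ) := by
    intro x hxX
    exact (hmemSF x).2 ⟨x, hxX, Or.inl ⟨1, by group⟩⟩
  have hcl : Subgroup.closure (SF : Set Γ) = ⊤ := by
    rw [eq_top_iff, ← hX]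
    exact Subgroup.closure_mono hXSF
  have hfin := closure_finite SF hconj hinv he (fun a _ => hexp a)
  rw [hcl] at hfin
  have : (Set.univ : Set Γ).Finite := by simpa using hfin
  exact Set.finite_univ_iff.1 this




def FinIdx (C : Subgroup G) : Prop := ∃ T : Finset G, ∀ g : G, ∃ t ∈ T, g * t⁻¹ ∈ C

lemma FinIdx.mono {C D : Subgroup G} (h : C ≤ D) : FinIdx C → FinIdx D :=
  fun ⟨T, hT⟩ => ⟨T, fun g => by obtain ⟨t, htT, hg⟩ := hT g; exact ⟨t, htT, h hg⟩⟩

lemma FinIdx.inf {C D : Subgroup G} : FinIdx C → FinIdx D → FinIdx (C ⊓ D) := by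
  classical
  rintro ⟨T, hT⟩ ⟨U, hU⟩
  refine ⟨(T ×ˢ U).image (fun p =>
    if h : ∃ u : G, u * p.1⁻¹ ∈ C ∧ u * p.2⁻¹ ∈ D then h.choose else 1), fun g => ?_⟩
  obtain ⟨t, htT, hgt⟩ := hT g
  obtain ⟨u, huU, hgu⟩ := hU g
  have hex : ∃ v : G, v * t⁻¹ ∈ C ∧ v * u⁻¹ ∈ D := ⟨g, hgt, hgu⟩
  refine ⟨_, Finset.mem_image.2 ⟨(t, u), Finset.mem_product.2 ⟨htT, huU⟩, rfl⟩, ?_⟩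
  rw [dif_pos hex]
  obtain ⟨h1, h2⟩ := hex.choose_spec
  refine Subgroup.mem_inf.2 ⟨?_, ?_⟩
  · have hcalc : g * hex.choose⁻¹ = (g * t⁻¹) * (hex.choose * t⁻¹)⁻¹ := by group
    rw [hcalc]; exact C.mul_mem hgt (C.inv_mem h1)
  · have hcalc : g * hex.choose⁻¹ = (g * u⁻¹) * (hex.choose * u⁻¹)⁻¹ := by group
    rw [hcalc]; exact D.mul_mem hgu (D.inv_mem h2)

lemma finIdx_conj {C D : Subgroup G} (h : G) (hD : ∀ g, g ∈ D ↔ h * g * h⁻¹ ∈ C) :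
    FinIdx C → FinIdx D := by
  classical
  rintro ⟨T, hT⟩
  refine ⟨T.image (fun t => h⁻¹ * t * h), fun g => ?_⟩
  obtain ⟨t, htT, hgt⟩ := hT (h * g * h⁻¹)
  refine ⟨h⁻¹ * t * h, Finset.mem_image_of_mem _ htT, ?_⟩
  rw [hD]
  have hcalc : h * (g * (h⁻¹ * t * h)⁻¹) * h⁻¹ = (h * g * h⁻¹) * t⁻¹ := by group
  rw [hcalc]; exact hgt

lemma conj_mem_iff {F : Subgroup G} (hFn : F.Normal) (w c : G) :
    w * c * w⁻¹ ∈ F ↔ c ∈ F := by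
  constructor
  · intro h
    have := hFn.conj_mem _ h w⁻¹
    simpa [mul_assoc] using this
  · intro h; exact hFn.conj_mem _ h w

/-- the preimage of the centralizer of `x` mod `F`. -/
def centerish (F : Subgroup G) (hFn : F.Normal) (x : G) : Subgroup G where
  carrier := {g : G | x⁻¹ * g⁻¹ * x * g ∈ F}
  one_mem' := by simpa using F.one_mem
  mul_mem' := by
    intro g h hg hh
    have key : x⁻¹ * (g * h)⁻¹ * x * (g * h) =
        (x⁻¹ * h⁻¹ * x * h) * (h⁻¹ * (x⁻¹ * g⁻¹ * x * g) * (h⁻¹)⁻¹) := by group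
    show x⁻¹ * (g * h)⁻¹ * x * (g * h) ∈ F
    rw [key]
    exact F.mul_mem hh (hFn.conj_mem _ hg h⁻¹)
  inv_mem' := by
    intro g hg
    show x⁻¹ * g⁻¹⁻¹ * x * g⁻¹ ∈ F
    have key : x⁻¹ * g⁻¹⁻¹ * x * g⁻¹ = g * (x⁻¹ * g⁻¹ * x * g)⁻¹ * g⁻¹ := by group
    rw [key]
    exact hFn.conj_mem _ (F.inv_mem hg) g

lemma mem_centerish {F : Subgroup G} {hFn : F.Normal} {x g : G} :
    g ∈ centerish F hFn x ↔ x⁻¹ * g⁻¹ * x * g ∈ F := Iff.rfl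

/-- the next FC-center over a normal subgroup `F`. -/
def FCstep (F : Subgroup G) (hFn : F.Normal) : Subgroup G where
  carrier := {x : G | FinIdx (centerish F hFn x)}
  one_mem' := by
    refine ⟨{1}, fun g => ⟨1, Finset.mem_singleton_self 1, ?_⟩⟩
    rw [mem_centerish]
    have : (1 : G)⁻¹ * (g * 1⁻¹)⁻¹ * 1 * (g * 1⁻¹) = 1 := by group
    rw [this]; exact F.one_mem
  mul_mem' := by
    intro x y hx hy
    refine (FinIdx.inf hx hy).mono ?_
    intro g hg
    obtain ⟨hgx, hgy⟩ := Subgroup.mem_inf.1 hg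
    rw [mem_centerish] at hgx hgy ⊢
    have key : (x * y)⁻¹ * g⁻¹ * (x * y) * g =
        (y⁻¹ * (x⁻¹ * g⁻¹ * x * g) * (y⁻¹)⁻¹) * (y⁻¹ * g⁻¹ * y * g) := by group
    rw [key]
    exact F.mul_mem (hFn.conj_mem _ hgx y⁻¹) hgy
  inv_mem' := by
    intro x hx
    refine hx.mono ?_
    intro g hg
    rw [mem_centerish] at hg ⊢
    have key : x⁻¹⁻¹ * g⁻¹ * x⁻¹ * g = x * (x⁻¹ * g⁻¹ * x * g)⁻¹ * x⁻¹ := by group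
    rw [key]
    exact hFn.conj_mem _ (F.inv_mem hg) x

lemma FCstep_normal (F : Subgroup G) (hFn : F.Normal) : (FCstep F hFn).Normal := by
  constructor
  intro x hx h
  show FinIdx (centerish F hFn (h * x * h⁻¹))
  refine finIdx_conj (C := centerish F hFn x) h⁻¹ ?_ hx
  intro g
  rw [mem_centerish, mem_centerish]
  have key : (h * x * h⁻¹)⁻¹ * g⁻¹ * (h * x * h⁻¹) * g =
      h * (x⁻¹ * (h⁻¹ * g * h⁻¹⁻¹)⁻¹ * x * (h⁻¹ * g * h⁻¹⁻¹)) * h⁻¹ := by group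
  rw [key, conj_mem_iff hFn]

lemma fc_normal_subgroup (G : Type*) [Group G] (m : ℕ) :
    ∃ F : Subgroup G, F.Normal ∧ (F : Set G) = FCset G m := by
  induction m with
  | zero =>
    refine ⟨⊥, inferInstance, ?_⟩
    rw [Subgroup.coe_bot]
    rfl
  | succ m ih =>
    obtain ⟨F, hFn, hFc⟩ := ih
    refine ⟨FCstep F hFn, FCstep_normal F hFn, ?_⟩
    ext x
    show FinIdx (centerish F hFn x) ↔ x ∈ FCset G (m + 1)
    have hmem : ∀ c : G, c ∈ F ↔ c ∈ FCset G m := by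
      intro c; rw [← SetLike.mem_coe, hFc]
    constructor
    · rintro ⟨T, hT⟩
      refine ⟨T, fun g => ?_⟩
      obtain ⟨t, htT, hgt⟩ := hT g
      exact ⟨t, htT, (hmem _).1 hgt⟩
    · rintro ⟨T, hT⟩
      refine ⟨T, fun g => ?_⟩
      obtain ⟨t, htT, hgt⟩ := hT g
      exact ⟨t, htT, (hmem _).2 hgt⟩

lemma conj_congr {F : Subgroup G} (hFn : F.Normal) {x a b w : G}
    (h1 : x⁻¹ * (a * w)⁻¹ * x * (a * w) ∈ F)
    (h2 : x⁻¹ * (b * w)⁻¹ * x * (b * w) ∈ F) :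
    (a⁻¹ * x * a)⁻¹ * (b⁻¹ * x * b) ∈ F := by
  have h3 := hFn.conj_mem _ (F.mul_mem (F.inv_mem h1) h2) w
  have h4 : (a⁻¹ * x * a)⁻¹ * (b⁻¹ * x * b) =
      w * ((x⁻¹ * (a * w)⁻¹ * x * (a * w))⁻¹ * (x⁻¹ * (b * w)⁻¹ * x * (b * w))) * w⁻¹ := by
    group
  rw [h4]; exact h3






theorem key {e : ℕ} (he : e ≠ 0) (hexp : ∀ g : G, g ^ e = 1) :
    ∀ n : ℕ, ∀ H : Subgroup G, (H : Set G) ⊆ FCset G n → H.FG → Finite H := by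
  intro n
  induction n with
  | zero =>
    intro H hsub _
    haveI : Subsingleton H := by
      constructor
      intro a b
      have ha : (a : G) ∈ FCset G 0 := hsub a.2
      have hb : (b : G) ∈ FCset G 0 := hsub b.2
      have ha' : (a : G) = 1 := ha
      have hb' : (b : G) = 1 := hb
      exact Subtype.ext (ha'.trans hb'.symm)
    exact Finite.of_subsingleton
  | succ n ih =>
    intro H hsub hHfg
    classical
    obtain ⟨F, hFn, hFc⟩ := fc_normal_subgroup G n
    haveI := hFn
    set N : Subgroup ↥H := F.subgroupOf H with hNdef
    haveI hNn : N.Normal := Subgroup.normal_subgroupOf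
    haveI : Group.FG ↥H := (Group.fg_iff_subgroup_fg H).2 hHfg
    -- exponent
    have hexpH : ∀ x : ↥H, x ^ e = 1 := by
      intro x
      ext
      push_cast
      exact hexp (x : G)
    have hexpQ : ∀ q : ↥H ⧸ N, q ^ e = 1 := by
      intro q
      obtain ⟨x, rfl⟩ := QuotientGroup.mk'_surjective N q
      rw [← map_pow, hexpH x, map_one]
    -- finite conjugacy classes in the quotient
    have hclass : ∀ x : ↥H,
        {y : ↥H ⧸ N | ∃ g : ↥H, QuotientGroup.mk (g⁻¹ * x * g) = y}.Finite := by
      intro x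
      have hx : (x : G) ∈ FCset G (n + 1) := hsub x.2
      obtain ⟨T, hT⟩ := hx
      set f : G → ↥H ⧸ N := fun t =>
        if h : ∃ g' : ↥H, (x : G)⁻¹ * ((g' : G) * t⁻¹)⁻¹ * (x : G) * ((g' : G) * t⁻¹) ∈ F
        then QuotientGroup.mk (h.choose⁻¹ * x * h.choose) else 1 with hfdef
      refine Set.Finite.subset (T.image f).finite_toSet ?_
      rintro y ⟨g, rfl⟩
      obtain ⟨t, htT, hgt⟩ := hT (g : G)
      have hgt' : (x : G)⁻¹ * ((g : G) * t⁻¹)⁻¹ * (x : G) * ((g : G) * t⁻¹) ∈ F := by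
        rw [← SetLike.mem_coe, hFc]; exact hgt
      have hex : ∃ g' : ↥H, (x : G)⁻¹ * ((g' : G) * t⁻¹)⁻¹ * (x : G) * ((g' : G) * t⁻¹) ∈ F :=
        ⟨g, hgt'⟩
      refine Finset.mem_coe.2 (Finset.mem_image.2 ⟨t, htT, ?_⟩)
      rw [hfdef]
      simp only [dif_pos hex]
      rw [QuotientGroup.eq]
      rw [Subgroup.mem_subgroupOf]
      push_cast
      exact conj_congr hFn hex.choose_spec hgt'
    have hFCQ : ∀ q : ↥H ⧸ N, {y : ↥H ⧸ N | ∃ g : ↥H ⧸ N, g⁻¹ * q * g = y}.Finite := by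
      intro q
      obtain ⟨x, rfl⟩ := QuotientGroup.mk'_surjective N q
      refine (hclass x).subset ?_
      rintro y ⟨gq, rfl⟩
      obtain ⟨g, rfl⟩ := QuotientGroup.mk'_surjective N gq
      exact ⟨g, by simp⟩
    haveI hQfin : Finite (↥H ⧸ N) :=
      finite_of_fc_of_exponent _ he hexpQ hFCQ inferInstance
    -- N is finitely generated
    have hidx : N.index ≠ 0 := by
      rw [Subgroup.index_eq_card]
      exact Nat.card_ne_zero.2 ⟨inferInstance, inferInstance⟩
    haveI : N.FiniteIndex := ⟨hidx⟩
    haveI : Group.FG ↥N := Subgroup.fg_of_index_ne_zero N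
    have hNfg : N.FG := (Group.fg_iff_subgroup_fg N).1 inferInstance
    -- push N into G and apply induction hypothesis
    have hMfg : (N.map H.subtype).FG := by
      obtain ⟨Sf, hSf⟩ := hNfg
      exact ⟨Sf.image H.subtype, by
        rw [Finset.coe_image, ← MonoidHom.map_closure, hSf]⟩
    have hMsub : ((N.map H.subtype : Subgroup G) : Set G) ⊆ FCset G n := by
      rw [hNdef, Subgroup.subgroupOf_map_subtype]
      intro z hz
      rw [← hFc]
      exact Set.mem_of_mem_of_subset hz (SetLike.coe_subset_coe.2 inf_le_left)
    have hMfin : Finite ↥(N.map H.subtype) := ih _ hMsub hMfg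
    have hNfin : Finite ↥N :=
      Finite.of_equiv _ (Subgroup.equivMapOfInjective N H.subtype H.subtype_injective).symm.toEquiv
    exact Finite.of_equiv _ (Subgroup.groupEquivQuotientProdSubgroup (s := N)).symm


end FCaux

/-- An FC-nilpotent group of finite exponent is locally finite: every finitely generated
subgroup is finite. -/
theorem locally_finite_of_fc_nilpotent_of_finite_exponent
    (G : Type*) [Group G] (n e : ℕ) (he : e ≠ 0)
    (hfc : FCset G n = Set.univ) (hexp : ∀ g : G, g ^ e = 1) :
    ∀ H : Subgroup G, H.FG → Finite H := by
  intro H hH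
  exact FCaux.key he hexp n H (by rw [hfc]; exact Set.subset_univ _) hH
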